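/- Every holomorphic function g on the unit disk with sup_{z∈𝔻}(1−|z|²)²|g(z)| ≤ 1 satisfies |g'(0)| ≤ 25√5/16, with equality for g(z) = (25√5/16)z. -/

import Mathlib

open Complex Metric

lemma wirths_poly {u : ℝ} (h0 : 0 ≤ u) (h1 : u ≤ 1) :
    3125 * u * (1 - u) ^ 4 ≤ 256 := by
  nlinarith [sq_nonneg (5*u-1), sq_nonneg (50*u-65),
    mul_nonneg (mul_nonneg (sq_nonneg (5*u-1)) (by linarith : (0:ℝ) ≤ 1 - u))
      (by nlinarith [sq_nonneg (50*u-65)] : (0:ℝ) ≤ 125*u^2 - 325*u + 240)]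

lemma wirths_t {t : ℝ} (h0 : 0 ≤ t) (h1 : t < 1) :
    25 * Real.sqrt 5 / 16 * (t * (1 - t ^ 2) ^ 2) ≤ 1 := by
  have hs : Real.sqrt 5 ^ 2 = 5 := Real.sq_sqrt (by norm_num)
  have hs0 : 0 ≤ Real.sqrt 5 := Real.sqrt_nonneg 5
  set a := 25 * Real.sqrt 5 / 16 * (t * (1 - t ^ 2) ^ 2) with ha
  have ht2 : 0 ≤ 1 - t ^ 2 := by nlinarith
  have ha0 : 0 ≤ a := by positivity
  have hpoly : 3125 * t ^ 2 * (1 - t ^ 2) ^ 4 ≤ 256 :=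
    wirths_poly (by positivity) (by nlinarith)
  have ha2 : a ^ 2 ≤ 1 := by
    have : a ^ 2 = 3125 * t ^ 2 * (1 - t ^ 2) ^ 4 / 256 := by
      rw [ha]; ring_nf; nlinarith [hs]
    rw [this]; linarith
  nlinarith [ha2, ha0]

/-- Wirths' lemma: a holomorphic `g` on `𝔻` with `sup (1-|z|²)²|g(z)| ≤ 1` satisfies
`|g'(0)| ≤ 25√5/16`, with equality for `g(z) = (25√5/16) z`. -/
theorem wirths_bound :
    (∀ g : ℂ → ℂ, DifferentiableOn ℂ g (ball (0 : ℂ) 1) →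
      (∀ z ∈ ball (0 : ℂ) 1, (1 - ‖z‖ ^ 2) ^ 2 * ‖g z‖ ≤ 1) →
      ‖deriv g 0‖ ≤ 25 * Real.sqrt 5 / 16) ∧
    (∀ z ∈ ball (0 : ℂ) 1,
      (1 - ‖z‖ ^ 2) ^ 2 *
        ‖(fun w => ((25 * Real.sqrt 5 / 16 : ℝ) : ℂ) * w) z‖ ≤ 1) ∧
    ‖deriv (fun w => ((25 * Real.sqrt 5 / 16 : ℝ) : ℂ) * w) 0‖
      = 25 * Real.sqrt 5 / 16 := by
  have hs : Real.sqrt 5 ^ 2 = 5 := Real.sq_sqrt (by norm_num)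
  have hs0 : 0 < Real.sqrt 5 := Real.sqrt_pos.2 (by norm_num)
  have hs2 : 2 ≤ Real.sqrt 5 := by nlinarith
  refine ⟨?_, ?_, ?_⟩
  · intro g hd hb
    set R : ℝ := (Real.sqrt 5)⁻¹ with hR
    have hR0 : 0 < R := by positivity
    have hR1 : R < 1 := by
      rw [hR, inv_lt_one_iff₀]; right; linarith
    have hsub : closedBall (0:ℂ) R ⊆ ball (0:ℂ) 1 :=
      closedBall_subset_ball hR1
    have hdc : DiffContOnCl ℂ g (ball (0:ℂ) R) := by
      refine DifferentiableOn.diffContOnCl ?_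
      refine hd.mono ?_
      rw [closure_ball _ hR0.ne']
      exact hsub
    have hC : ∀ z ∈ sphere (0:ℂ) R, ‖g z‖ ≤ 25 / 16 := by
      intro z hz
      have hzabs : ‖z‖ = R := by
        simpa using mem_sphere_zero_iff_norm.1 hz
      have hzb : z ∈ ball (0:ℂ) 1 := hsub (by
        simpa [mem_closedBall, hzabs] using le_refl R)
      have := hb z hzb
      rw [hzabs] at this
      have hRsq : R ^ 2 = 1 / 5 := by
        rw [hR]; field_simp; exact hs.symm
      rw [hRsq] at this
      have h45 : (1 - 1/5 : ℝ) ^ 2 = 16 / 25 := by norm_num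
      nlinarith [this]
    have := norm_deriv_le_of_forall_mem_sphere_norm_le hR0 hdc hC
    calc ‖deriv g 0‖ ≤ 25 / 16 / R := this
      _ = 25 * Real.sqrt 5 / 16 := by
          rw [hR]; field_simp
  · intro z hz
    have hz1 : ‖z‖ < 1 := by simpa using mem_ball_zero_iff.1 hz
    have h0 : 0 ≤ ‖z‖ := norm_nonneg z
    have := wirths_t h0 hz1
    have habs : ‖((25 * Real.sqrt 5 / 16 : ℝ) : ℂ) * z‖
        = 25 * Real.sqrt 5 / 16 * ‖z‖ := by
      rw [norm_mul, Complex.norm_real, Real.norm_of_nonneg (by positivity)]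
    simp only [habs]
    calc (1 - ‖z‖ ^ 2) ^ 2 * (25 * Real.sqrt 5 / 16 * ‖z‖)
        = 25 * Real.sqrt 5 / 16 * (‖z‖ * (1 - ‖z‖ ^ 2) ^ 2) := by ring
      _ ≤ 1 := this
  · have hderiv : deriv (fun w => ((25 * Real.sqrt 5 / 16 : ℝ) : ℂ) * w) 0
        = ((25 * Real.sqrt 5 / 16 : ℝ) : ℂ) := by
      simpa using ((hasDerivAt_id (0:ℂ)).const_mul ((25 * Real.sqrt 5 / 16 : ℝ) : ℂ)).deriv
    rw [hderiv, Complex.norm_real, Real.norm_of_nonneg (by positivity)]
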